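/- Let V be a right quaternionic vector space, I, J, K the right multiplications by i, j, k ∈ ℍ on V. Let ω be a real (2,0)-form with respect to I, meaning ω is ℂ-bilinear alternating on (V, I) of type (2,0) and satisfies conj(J∘ω) = ω. Define B(X) := ω(X, X∘J). Then B is real-valued and invariant under right multiplication by I, J, and K, i.e., B(X∘I) = B(X∘J) = B(X∘K) = B(X) for all X ∈ V; hence B is the restriction to the diagonal of a hyperhermitian form on V. -/
import Mathlib


/-- let `V` be a right quaternionic vector space, with `I, J, K` denoting
the operators of right multiplication by `i, j, k` (so that `op_{ab} = op_b ∘ op_a`,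
e.g. `X∘(IJ) = (X∘I)∘J` and `IJ = K` gives `J (I X) = K X`). Let `ω` be a real
`(2,0)`-form with respect to `I`, i.e. an alternating `ℝ`-bilinear complex-valued form,
`ℂ`-linear for the complex structure `I` in each argument, with `conj (J∘ω) = ω`.
Then `B(X) := ω(X, X∘J)` is real-valued and invariant under `I, J, K`. -/
theorem stmt_11 {V : Type*} [AddCommGroup V] [Module ℝ V]
    (I J K : V →ₗ[ℝ] V)
    (hII : ∀ X, I (I X) = -X) (hJJ : ∀ X, J (J X) = -X) (hKK : ∀ X, K (K X) = -X)
    (hIJ : ∀ X, J (I X) = K X) (hJI : ∀ X, I (J X) = -K X)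
    (hJK : ∀ X, K (J X) = I X) (hKJ : ∀ X, J (K X) = -I X)
    (hKI : ∀ X, I (K X) = J X) (hIK : ∀ X, K (I X) = -J X)
    (ω : V →ₗ[ℝ] V →ₗ[ℝ] ℂ)
    (halt : ∀ X Y, ω X Y = -ω Y X)
    (h20l : ∀ X Y, ω (I X) Y = Complex.I * ω X Y)
    (h20r : ∀ X Y, ω X (I Y) = Complex.I * ω X Y)
    (hreal : ∀ X Y, starRingEnd ℂ (ω (J X) (J Y)) = ω X Y) :
    ∀ X : V,
      (ω X (J X)).im = 0 ∧
      ω (I X) (J (I X)) = ω X (J X) ∧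
      ω (J X) (J (J X)) = ω X (J X) ∧
      ω (K X) (J (K X)) = ω X (J X) := by
  intro X
  have hJinv : ω (J X) (J (J X)) = ω X (J X) := by
    rw [hJJ, map_neg, halt (J X) X, neg_neg]
  have hIinv : ω (I X) (J (I X)) = ω X (J X) := by
    rw [hIJ, h20l]
    have : ω X (K X) = -Complex.I * ω X (J X) := by
      have h1 : I (J X) = -K X := hJI X
      have h2 : ω X (I (J X)) = Complex.I * ω X (J X) := h20r X (J X)
      rw [h1, map_neg] at h2
      have := congrArg Neg.neg h2
      rw [neg_neg] at this
      rw [this]; ring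
    rw [this]; ring_nf
    rw [Complex.I_sq]; ring
  refine ⟨?_, hIinv, hJinv, ?_⟩
  · have h := hreal X (J X)
    rw [hJJ, map_neg, halt (J X) X, neg_neg] at h
    exact Complex.conj_eq_iff_im.mp h
  · rw [hKJ, map_neg, halt (K X) (I X), neg_neg, ← hIJ X, hIinv]
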